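/- Along the normalized flocking flow dx_i/dt = (α/(k_i ρ_i))·Σ_q A_iq (x_q - (x_i·x_q)x_i) with unit vectors x_i, the time derivative of the energy E = (1/4)Σ_i Σ_j A_ij ‖x_j - x_i‖² equals dE/dt = α Σ_i (1/(k_i ρ_i)) [ (x_i · y_i)² - ‖y_i‖² ], where y_i = Σ_q A_iq x_q is the sum of neighbor velocities. -/

import Mathlib

open scoped RealInnerProductSpace BigOperators

/-- Along the normalized flocking flow, the energy `E = (1/4)Σᵢ Σⱼ Aᵢⱼ ‖xⱼ - xᵢ‖²`
has time derivative `α Σᵢ (1/(kᵢ ρᵢ)) [(xᵢ·yᵢ)² - ‖yᵢ‖²]` where `yᵢ = Σ_q Aᵢ_q x_q`. -/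
theorem flocking_energy_derivative
    {D n : ℕ} (A : Fin n → Fin n → ℝ) (α : ℝ) (hα : 0 < α)
    (hA : ∀ i j, A i j = 0 ∨ A i j = 1)
    (hAsymm : ∀ i j, A i j = A j i)
    (hloop : ∀ i, A i i = 0)
    (k ρ : Fin n → ℝ) (hk : ∀ i, k i = ∑ j, A i j)
    (hkpos : ∀ i, 0 < k i) (hρpos : ∀ i, 0 < ρ i)
    (x : ℝ → Fin n → EuclideanSpace ℝ (Fin D)) (t₀ : ℝ)
    (hunit : ∀ t i, ‖x t i‖ = 1)
    (hflow : ∀ i, HasDerivAt (fun t => x t i)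
      ((α / (k i * ρ i)) •
        ∑ q, A i q • (x t₀ q - ⟪x t₀ i, x t₀ q⟫ • x t₀ i)) t₀) :
    HasDerivAt (fun t => (1 / 4) * ∑ i, ∑ j, A i j * ‖x t j - x t i‖ ^ 2)
      (α * ∑ i, (1 / (k i * ρ i)) *
        ((⟪x t₀ i, ∑ q, A i q • x t₀ q⟫) ^ 2 - ‖∑ q, A i q • x t₀ q‖ ^ 2)) t₀ := by
  set v : Fin n → EuclideanSpace ℝ (Fin D) := fun i =>
    (α / (k i * ρ i)) • ∑ q, A i q • (x t₀ q - ⟪x t₀ i, x t₀ q⟫ • x t₀ i) with hv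
  set y : Fin n → EuclideanSpace ℝ (Fin D) := fun i => ∑ q, A i q • x t₀ q with hy
  have hvy : ∀ i, v i = (α / (k i * ρ i)) • (y i - ⟪x t₀ i, y i⟫ • x t₀ i) := by
    intro i
    simp only [hv, hy]
    congr 1
    simp only [smul_sub, smul_smul]
    rw [Finset.sum_sub_distrib, ← Finset.sum_smul, inner_sum]
    congr 2
    exact Finset.sum_congr rfl fun q _ => by rw [real_inner_smul_right]
  have hxv : ∀ i, ⟪x t₀ i, v i⟫ = 0 := by
    intro i
    rw [hvy, real_inner_smul_right, inner_sub_right, real_inner_smul_right,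
      real_inner_self_eq_norm_sq, hunit t₀ i]
    ring
  have hyv : ∀ i, ⟪y i, v i⟫ =
      (α / (k i * ρ i)) * (‖y i‖ ^ 2 - ⟪x t₀ i, y i⟫ ^ 2) := by
    intro i
    rw [hvy, real_inner_smul_right, inner_sub_right, real_inner_smul_right,
      ← real_inner_self_eq_norm_sq, real_inner_comm (y i) (x t₀ i)]
    ring
  have hder : HasDerivAt (fun t => (1 / 4) * ∑ i, ∑ j, A i j * ‖x t j - x t i‖ ^ 2)
      ((1 / 4) * ∑ i, ∑ j, A i j *
        (2 * ⟪x t₀ j - x t₀ i, v j - v i⟫)) t₀ := by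
    refine HasDerivAt.const_mul _ (HasDerivAt.fun_sum fun i _ => HasDerivAt.fun_sum fun j _ => ?_)
    have h1 : HasDerivAt (fun t => x t j - x t i) (v j - v i) t₀ :=
      (hflow j).sub (hflow i)
    have h2 := h1.inner ℝ h1
    have h3 : ⟪x t₀ j - x t₀ i, v j - v i⟫ + ⟪v j - v i, x t₀ j - x t₀ i⟫ =
        2 * ⟪x t₀ j - x t₀ i, v j - v i⟫ := by
      rw [real_inner_comm (v j - v i)]; ring
    rw [h3] at h2
    have h4 : (fun t => A i j * ‖x t j - x t i‖ ^ 2) =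
        fun t => A i j * ⟪x t j - x t i, x t j - x t i⟫ := by
      funext t; rw [real_inner_self_eq_norm_sq]
    rw [h4]
    exact h2.const_mul _
  convert hder using 1
  have expand : ∀ i j, A i j * (2 * ⟪x t₀ j - x t₀ i, v j - v i⟫) =
      -2 * (A i j * ⟪x t₀ j, v i⟫) - 2 * (A i j * ⟪x t₀ i, v j⟫) := by
    intro i j
    rw [inner_sub_left, inner_sub_right, inner_sub_right, hxv i, hxv j]
    ring
  have hswap : ∑ i, ∑ j, A i j * ⟪x t₀ i, v j⟫ = ∑ i, ∑ j, A i j * ⟪x t₀ j, v i⟫ := by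
    rw [Finset.sum_comm]
    refine Finset.sum_congr rfl fun i _ => Finset.sum_congr rfl fun j _ => ?_
    rw [hAsymm]
  have hyinner : ∀ i, ∑ j, A i j * ⟪x t₀ j, v i⟫ = ⟪y i, v i⟫ := by
    intro i
    rw [hy]
    rw [sum_inner]
    exact Finset.sum_congr rfl fun j _ => (real_inner_smul_left _ _ _).symm
  calc α * ∑ i, (1 / (k i * ρ i)) *
        ((⟪x t₀ i, ∑ q, A i q • x t₀ q⟫) ^ 2 - ‖∑ q, A i q • x t₀ q‖ ^ 2)
      = -∑ i, ⟪y i, v i⟫ := by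
        rw [← Finset.sum_neg_distrib, Finset.mul_sum]
        refine Finset.sum_congr rfl fun i _ => ?_
        rw [hyv i]
        simp only [hy]
        ring
    _ = (1 / 4) * ∑ i, ∑ j, A i j * (2 * ⟪x t₀ j - x t₀ i, v j - v i⟫) := by
        simp only [expand, Finset.sum_sub_distrib, ← Finset.mul_sum]
        rw [hswap]
        simp only [hyinner]
        ring
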